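/- arXiv:1507.07856 — 3 statements merged into one kernel-verified Lean document; each statement's English description precedes it below -/
import Mathlib

section
/- Let H be a subgraph of G and T a minimal alternating circuit that is a switch on H (edges of T ∩ H colored red, edges of T \ H colored blue). If G' = Switching(H, T), then for every vertex v, |N_H(v) ∩ N_{G'}(v)| >= d_H(v) - 2. -/
open SimpleGraph

variable {V : Type*}

/-- The quotient multigraph `H/Q` of a graph by a partition (setoid), with parts adjacent
iff some edge of `H` joins them. -/
def quotGraph (H : SimpleGraph V) (s : Setoid V) : SimpleGraph (Quotient s) where
  Adj x y := x ≠ y ∧ ∃ u v : V, Quotient.mk s u = x ∧ Quotient.mk s v = y ∧ H.Adj u v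
  symm := by constructor; rintro x y ⟨h, u, v, hu, hv, ha⟩; exact ⟨h.symm, v, u, hv, hu, ha.symm⟩
  loopless := by constructor; rintro x ⟨h, _⟩; exact h rfl

/-- `H` connects the partition `Q` if the quotient `H/Q` is connected. -/
def Connects (H : SimpleGraph V) (s : Setoid V) : Prop := (quotGraph H s).Connected

/-- `H` is an `f`-factor of `G`: a spanning subgraph with degree `f v` at each vertex. -/
def IsFFactor (G H : SimpleGraph V) (f : V → ℕ) : Prop :=
  H ≤ G ∧ ∀ v : V, (H.neighborSet v).ncard = f v

/-- A list of edges alternates in color, cyclically (consecutive edges have distinct colors,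
including the last/first pair for a closed tour). -/
def AltChain (red : Sym2 V → Prop) (l : List (Sym2 V)) : Prop :=
  List.Chain' (fun e f => ¬ (red e ↔ red f)) (l ++ l.take 1)

/-- `S` is an alternating circuit: it admits a closed Eulerian tour in which every pair
of consecutive edges have different colors. -/
def IsAlternatingCircuit (S : SimpleGraph V) (red : Sym2 V → Prop) : Prop :=
  letI := Classical.decEq V
  ∃ (v : V) (w : S.Walk v v), w.IsEulerian ∧ AltChain red w.edges

/-- The subgraph of `T` consisting of a single connected component `K`. -/
def compGraph (T : SimpleGraph V) (K : T.ConnectedComponent) : SimpleGraph V where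
  Adj u v := T.Adj u v ∧ T.connectedComponentMk u = K
  symm := by
    constructor
    rintro u v ⟨h, hk⟩
    exact ⟨h.symm, (ConnectedComponent.sound h.symm.reachable).trans hk⟩
  loopless := by constructor; rintro v ⟨h, _⟩; exact h.ne rfl

/-- `S` is a switch on `H`: coloring edges of `S ∩ H` red and edges of `S \ H` blue,
every connected component of `S` is an alternating circuit. -/
def IsSwitch (S H : SimpleGraph V) : Prop :=
  ∀ K : S.ConnectedComponent, IsAlternatingCircuit (compGraph S K) (fun e => e ∈ H.edgeSet)

/-- A minimal alternating circuit: each vertex has at most two red and two blue incident edges. -/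
def IsMinimalAC (S : SimpleGraph V) (red : Sym2 V → Prop) : Prop :=
  IsAlternatingCircuit S red ∧ ∀ v : V,
    {u | S.Adj v u ∧ red s(v, u)}.ncard ≤ 2 ∧ {u | S.Adj v u ∧ ¬ red s(v, u)}.ncard ≤ 2

/-- `Switching(H, T)`: remove the edges of `T ∩ H` from `H` and add the edges of `T \ H`. -/
def switching (H T : SimpleGraph V) : SimpleGraph V where
  Adj u v := (H.Adj u v ∧ ¬ T.Adj u v) ∨ (T.Adj u v ∧ ¬ H.Adj u v)
  symm := by
    constructor
    rintro u v (⟨h1, h2⟩ | ⟨h1, h2⟩)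
    · exact Or.inl ⟨h1.symm, fun h => h2 h.symm⟩
    · exact Or.inr ⟨h1.symm, fun h => h2 h.symm⟩
  loopless := by constructor; rintro v (⟨h, _⟩ | ⟨h, _⟩) <;> exact h.ne rfl

/-- Total weight of the edges of a graph. -/
noncomputable def wt (w : Sym2 V → ℝ) (G : SimpleGraph V) : ℝ := ∑ᶠ e ∈ G.edgeSet, w e

theorem stmt7 {V : Type*} [Fintype V] (G H T : SimpleGraph V)
    (hH : H ≤ G) (hT : T ≤ G)
    (hmin : IsMinimalAC T (fun e => e ∈ H.edgeSet)) :
    ∀ v : V,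
      (H.neighborSet v).ncard - 2 ≤ (H.neighborSet v ∩ (switching H T).neighborSet v).ncard := by
  intro v
  set A := H.neighborSet v with hA
  set B := H.neighborSet v ∩ (switching H T).neighborSet v with hB
  set R := {u | T.Adj v u ∧ (fun e => e ∈ H.edgeSet) s(v, u)} with hR
  have hsub : A ⊆ B ∪ R := by
    intro u hu
    by_cases ht : T.Adj v u
    · exact Or.inr ⟨ht, H.mem_edgeSet.2 hu⟩
    · exact Or.inl ⟨hu, Or.inl ⟨hu, ht⟩⟩
  have hRcard : R.ncard ≤ 2 := (hmin.2 v).1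
  have hBfin : B.Finite := Set.toFinite _
  have hRfin : R.Finite := Set.toFinite _
  have h1 : A.ncard ≤ (B ∪ R).ncard := Set.ncard_le_ncard hsub (hBfin.union hRfin)
  have h2 : (B ∪ R).ncard ≤ B.ncard + R.ncard := Set.ncard_union_le B R
  omega
end

section
/- Every alternating circuit U (with edges colored red and blue) can be decomposed into a family of edge-disjoint minimal alternating circuits; moreover, for any subset S of the edges of U, one can choose a subfamily of this decomposition that covers all edges of S. -/
open SimpleGraph

variable {V : Type*}

lemma altChain_iff (red : Sym2 V → Prop) (l : List (Sym2 V)) :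
    AltChain red l ↔ List.Chain' (fun e f => ¬ (red e ↔ red f)) l ∧
      ∀ a ∈ l.getLast?, ∀ b ∈ l.head?, ¬ (red a ↔ red b) := by
  cases l with
  | nil => simp [AltChain]
  | cons a t =>
    rw [AltChain, List.take_succ_cons, List.take_zero]
    simp only [List.Chain']
    rw [List.isChain_append]
    simp

lemma altChain_split2 {red : Sym2 V → Prop} {l₁ l₂ : List (Sym2 V)}
    (h₁ : l₁ ≠ []) (h₂ : l₂ ≠ [])
    (h : AltChain red (l₁ ++ l₂))
    (hcol : ∀ a ∈ l₁.head?, ∀ b ∈ l₂.head?, (red a ↔ red b)) :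
    AltChain red l₁ ∧ AltChain red l₂ := by
  obtain ⟨a, t, rfl⟩ := List.exists_cons_of_ne_nil h₁
  obtain ⟨b, s, rfl⟩ := List.exists_cons_of_ne_nil h₂
  rw [altChain_iff] at h
  obtain ⟨hc, hw⟩ := h
  simp only [List.Chain'] at hc
  rw [List.isChain_append] at hc
  obtain ⟨hc₁, hc₂, hj⟩ := hc
  have hab : red a ↔ red b := hcol a rfl b rfl
  have hwrap : ¬ (red ((b :: s).getLast (by simp)) ↔ red a) := by
    refine hw ((b :: s).getLast (by simp)) ?_ a rfl
    rw [List.getLast?_append_of_ne_nil _ h₂]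
    simp [List.getLast?_eq_getLast]
  have hjunc : ¬ (red ((a :: t).getLast (by simp)) ↔ red b) := by
    exact hj ((a :: t).getLast (by simp)) (by simp [List.getLast?_eq_getLast]) b rfl
  constructor
  · rw [altChain_iff]
    refine ⟨hc₁, ?_⟩
    rintro a' ha' b' hb'
    obtain rfl : (a :: t).getLast (by simp) = a' := by simpa [List.getLast?_eq_getLast] using ha'
    obtain rfl : a = b' := by simpa using hb'
    intro hiff
    exact hjunc (hiff.trans hab)
  · rw [altChain_iff]
    refine ⟨hc₂, ?_⟩
    rintro a' ha' b' hb'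
    obtain rfl : (b :: s).getLast (by simp) = a' := by simpa [List.getLast?_eq_getLast] using ha'
    obtain rfl : b = b' := by simpa using hb'
    intro hiff
    exact hwrap (hiff.trans hab.symm)

lemma altChain_split3 {red : Sym2 V → Prop} {l₁ l₂ l₃ : List (Sym2 V)}
    (h₁ : l₁ ≠ []) (h₂ : l₂ ≠ []) (h₃ : l₃ ≠ [])
    (h : AltChain red (l₁ ++ (l₂ ++ l₃)))
    (hcol : ∀ a ∈ l₂.head?, ∀ b ∈ l₃.head?, (red a ↔ red b)) :
    AltChain red (l₁ ++ l₃) ∧ AltChain red l₂ := by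
  obtain ⟨a, t, rfl⟩ := List.exists_cons_of_ne_nil h₁
  obtain ⟨b, s, rfl⟩ := List.exists_cons_of_ne_nil h₂
  obtain ⟨c, r, rfl⟩ := List.exists_cons_of_ne_nil h₃
  rw [altChain_iff] at h
  obtain ⟨hc, hw⟩ := h
  simp only [List.Chain'] at hc
  rw [List.isChain_append] at hc
  obtain ⟨hc₁, hc₂₃, hj₁⟩ := hc
  rw [List.isChain_append] at hc₂₃
  obtain ⟨hc₂, hc₃, hj₂⟩ := hc₂₃
  have hbc : red b ↔ red c := hcol b rfl c rfl
  -- junction l₁ → l₂ : R (last l₁) b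
  have hj1 : ¬ (red ((a :: t).getLast (by simp)) ↔ red b) :=
    hj₁ _ (by simp [List.getLast?_eq_getLast]) b rfl
  -- junction l₂ → l₃ : R (last l₂) c
  have hj2 : ¬ (red ((b :: s).getLast (by simp)) ↔ red c) :=
    hj₂ _ (by simp [List.getLast?_eq_getLast]) c rfl
  -- wrap : R (last l₃) a
  have hw' : ¬ (red ((c :: r).getLast (by simp)) ↔ red a) := by
    refine hw _ ?_ a (by simp)
    rw [List.getLast?_append_of_ne_nil _ (by simp : (b :: s) ++ (c :: r) ≠ [])]
    rw [List.getLast?_append_of_ne_nil _ (by simp : (c :: r) ≠ [])]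
    simp [List.getLast?_eq_getLast]
  constructor
  · rw [altChain_iff]
    simp only [List.Chain']
    rw [List.isChain_append]
    refine ⟨⟨hc₁, hc₃, ?_⟩, ?_⟩
    · rintro a' ha' b' hb'
      obtain rfl : (a :: t).getLast (by simp) = a' := by
        simpa [List.getLast?_eq_getLast] using ha'
      obtain rfl : c = b' := by simpa using hb'
      intro hiff; exact hj1 (hiff.trans hbc.symm)
    · rintro a' ha' b' hb'
      obtain rfl : a = b' := by simpa using hb'
      obtain rfl : (c :: r).getLast (by simp) = a' := by
        rw [List.getLast?_append_of_ne_nil _ (by simp : (c :: r) ≠ [])] at ha'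
        simpa [List.getLast?_eq_getLast] using ha'
      exact hw'
  · rw [altChain_iff]
    refine ⟨hc₂, ?_⟩
    rintro a' ha' b' hb'
    obtain rfl : (b :: s).getLast (by simp) = a' := by
      simpa [List.getLast?_eq_getLast] using ha'
    obtain rfl : b = b' := by simpa using hb'
    intro hiff; exact hj2 (hiff.trans hbc)

lemma altChain_rotate_one {red : Sym2 V → Prop} {a : Sym2 V} {t : List (Sym2 V)}
    (h : AltChain red (a :: t)) : AltChain red (t ++ [a]) := by
  cases t with
  | nil => simpa using h
  | cons b s =>
    rw [altChain_iff] at h ⊢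
    obtain ⟨hc, hw⟩ := h
    have hwrap : ¬ (red ((a :: b :: s).getLast (by simp)) ↔ red a) :=
      hw _ (by simp [List.getLast?_eq_getLast]) a rfl
    have hab : ¬ (red a ↔ red b) := hc.rel_head
    constructor
    · simp only [List.Chain']
      rw [List.isChain_append]
      refine ⟨hc.tail, by simp, ?_⟩
      rintro x hx y hy
      obtain rfl : a = y := by simpa using hy
      obtain rfl : (b :: s).getLast (by simp) = x := by
        simpa [List.getLast?_eq_getLast] using hx
      have : (a :: b :: s).getLast (by simp) = (b :: s).getLast (by simp) := by
        rw [List.getLast_cons]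
      rw [this] at hwrap
      exact hwrap
    · rintro x hx y hy
      obtain rfl : a = x := by
        rw [List.getLast?_append_of_ne_nil _ (by simp)] at hx
        simpa using hx
      obtain rfl : b = y := by
        rw [List.head?_append_of_ne_nil _ (by simp)] at hy
        simpa using hy
      exact hab

lemma altChain_rotate {red : Sym2 V → Prop} {l : List (Sym2 V)}
    (h : AltChain red l) (n : ℕ) : AltChain red (l.rotate n) := by
  induction n generalizing l with
  | zero => simpa using h
  | succ n ih =>
    cases l with
    | nil => simpa using h
    | cons a t =>
      rw [List.rotate_cons_succ]
      exact ih (altChain_rotate_one h)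

lemma altChain_of_rotated {red : Sym2 V → Prop} {l l' : List (Sym2 V)}
    (h : AltChain red l) (hr : l ~r l') : AltChain red l' := by
  obtain ⟨n, rfl⟩ := hr
  exact altChain_rotate h n

lemma altChain_reverse {red : Sym2 V → Prop} {l : List (Sym2 V)}
    (h : AltChain red l) : AltChain red l.reverse := by
  cases l with
  | nil => simpa using h
  | cons a t =>
    rw [altChain_iff] at h ⊢
    obtain ⟨hc, hw⟩ := h
    refine ⟨?_, ?_⟩
    · simp only [List.Chain']
      rw [List.isChain_reverse]
      exact hc.imp (fun {e f} hef hiff => hef hiff.symm)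
    · rintro x hx y hy
      rw [List.getLast?_reverse] at hx
      rw [List.head?_reverse] at hy
      intro hiff
      exact hw y hy x hx hiff.symm

lemma altChain_congr {red red' : Sym2 V → Prop} (hrr : ∀ e, red e ↔ red' e)
    {l : List (Sym2 V)} (h : AltChain red l) : AltChain red' l := by
  refine List.IsChain.imp ?_ h
  intro e f hef hiff
  exact hef ((hrr e).trans (hiff.trans (hrr f).symm))

open SimpleGraph Walk in
lemma countA {U : SimpleGraph V} [DecidableEq V] {red : Sym2 V → Prop} [DecidablePred red]
    (x : V) : ∀ {u v : V} (p : U.Walk u v),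
    List.Chain' (fun e f => ¬ (red e ↔ red f)) p.edges →
    p.edges.countP (fun e => decide (red e ∧ x ∈ e)) ≤
      p.support.tail.count x +
      (match p.edges with
        | [] => 0
        | e :: _ => if u = x ∧ red e then 1 else 0) := by
  intro u v p
  induction p with
  | nil => simp
  | @cons u b v hadj q ih =>
    intro hc
    have hc' : List.Chain' (fun e f => ¬ (red e ↔ red f)) q.edges := hc.tail
    have hj : ∀ f ∈ q.edges.head?, ¬ (red s(u, b) ↔ red f) := by
      intro f hf
      exact (List.isChain_cons.mp (by simpa [List.Chain'] using hc)).1 f hf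
    have ihq := ih hc'
    simp only [Walk.edges_cons, Walk.support_cons, List.countP_cons, List.tail_cons]
    rw [Walk.support_eq_cons q, List.count_cons]
    by_cases hred : red s(u, b)
    · by_cases hux : u = x
      · subst hux
        have hbu : ¬ (b = u) := fun h => hadj.ne (h ▸ rfl)
        have hbonus : (match q.edges with
            | [] => 0
            | e :: _ => if b = u ∧ red e then 1 else 0) = 0 := by
          cases q.edges with
          | nil => rfl
          | cons f r => simp [hbu]
        rw [hbonus] at ihq
        have hm : u ∈ s(u, b) := Sym2.mem_mk_left u b
        simp only [hred, hm, and_self, decide_true, if_true, true_and, beq_iff_eq, hbu, if_false]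
        omega
      · -- u ≠ x
        have hbonus : (match q.edges with
            | [] => 0
            | e :: _ => if b = x ∧ red e then 1 else 0) = 0 := by
          cases hqe : q.edges with
          | nil => rfl
          | cons f r =>
            have : ¬ red f := by
              intro hf
              exact hj f (by simp [hqe]) (iff_of_true hred hf)
            simp [this]
        rw [hbonus] at ihq
        by_cases hxe : x ∈ s(u, b)
        · have hbx : b = x := by
            rcases Sym2.mem_iff.mp hxe with h | h
            · exact absurd h.symm hux
            · exact h.symm
          subst hbx
          simp only [hred, hxe, and_self, decide_true, if_true, hux, false_and, if_false,
            beq_iff_eq, if_true, true_and]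
          omega
        · have hbx : ¬ (b = x) := fun h => hxe (h ▸ Sym2.mem_mk_right u b)
          simp only [hxe, and_false, decide_false, if_false, hux, false_and,
            beq_iff_eq, hbx, Bool.false_eq_true]
          omega
    · have hbonus : (match q.edges with
          | [] => 0
          | e :: _ => if b = x ∧ red e then 1 else 0) ≤ (if (b == x) = true then 1 else 0) := by
        cases q.edges with
        | nil => exact Nat.zero_le _
        | cons f r =>
          by_cases hb : b = x <;> by_cases hf : red f <;> simp [hb, hf]
      simp only [hred, false_and, decide_false, if_false, and_false, Bool.false_eq_true]
      omega

open SimpleGraph Walk in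
lemma ncard_le_countP {U : SimpleGraph V} [Fintype V] [DecidableEq V] {red : Sym2 V → Prop}
    [DecidablePred red] {v : V} {w : U.Walk v v} (hE : w.IsEulerian) (x : V) :
    {u | U.Adj x u ∧ red s(x, u)}.ncard ≤
      w.edges.countP (fun e => decide (red e ∧ x ∈ e)) := by
  classical
  set S : Set V := {u | U.Adj x u ∧ red s(x, u)} with hS
  set L : List (Sym2 V) := w.edges.filter (fun e => decide (red e ∧ x ∈ e)) with hL
  have hLsub : (fun u => s(x, u)) '' S ⊆ {e | e ∈ L} := by
    rintro e ⟨u, ⟨hadj, hred⟩, rfl⟩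
    simp only [hL, Set.mem_setOf_eq, List.mem_filter, decide_eq_true_eq]
    exact ⟨hE.mem_edges_iff.mpr (U.mem_edgeSet.mpr hadj), hred, Sym2.mem_mk_left x u⟩
  have hinj : Set.InjOn (fun u => s(x, u)) S := by
    intro a _ b _ hab
    exact Sym2.congr_right.mp hab
  have h1 : S.ncard = ((fun u => s(x, u)) '' S).ncard := (Set.ncard_image_of_injOn hinj).symm
  have h2 : ((fun u => s(x, u)) '' S).ncard ≤ ({e | e ∈ L} : Set (Sym2 V)).ncard :=
    Set.ncard_le_ncard hLsub (Set.toFinite _)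
  have hnodup : L.Nodup := hE.isTrail.edges_nodup.filter _
  have h3 : ({e | e ∈ L} : Set (Sym2 V)).ncard = L.length := by
    have : ({e | e ∈ L} : Set (Sym2 V)) = ↑L.toFinset := by ext e; simp
    rw [this, Set.ncard_coe_finset, List.toFinset_card_of_nodup hnodup]
  rw [List.countP_eq_length_filter, ← hL]
  omega

open SimpleGraph Walk in
lemma isAC_fromWalk {U : SimpleGraph V} {red : Sym2 V → Prop} {x : V} (p : U.Walk x x)
    (hnd : p.edges.Nodup) (hA : AltChain red p.edges) :
    IsAlternatingCircuit (fromEdgeSet {e | e ∈ p.edges}) red ∧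
    fromEdgeSet {e | e ∈ p.edges} ≤ U ∧
    (fromEdgeSet {e | e ∈ p.edges}).edgeSet = {e | e ∈ p.edges} := by
  have hes : (fromEdgeSet {e | e ∈ p.edges}).edgeSet = {e | e ∈ p.edges} := by
    rw [edgeSet_fromEdgeSet]
    ext e
    simp only [Set.mem_diff, Set.mem_setOf_eq, and_iff_left_iff_imp]
    intro he
    exact U.not_isDiag_of_mem_edgeSet (p.edges_subset_edgeSet he)
  have hle : fromEdgeSet {e | e ∈ p.edges} ≤ U := by
    intro a b hab
    rw [fromEdgeSet_adj] at hab
    exact p.adj_of_mem_edges hab.1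
  refine ⟨?_, hle, hes⟩
  letI := Classical.decEq V
  have hsub : ∀ e ∈ p.edges, e ∈ (fromEdgeSet {e | e ∈ p.edges}).edgeSet := fun e he => by
    rw [hes]; exact he
  refine ⟨x, p.transfer _ hsub, ?_, ?_⟩
  · intro e he
    rw [Walk.edges_transfer]
    rw [hes] at he
    exact List.count_eq_one_of_mem hnd he
  · rw [Walk.edges_transfer]
    exact hA

open SimpleGraph Walk in
lemma assemble {U : SimpleGraph V} [DecidableEq V] {red : Sym2 V → Prop} {x v : V}
    {w : U.Walk v v} (hE : w.IsEulerian) (pA pB : U.Walk x x)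
    (hperm : w.edges.Perm (pA.edges ++ pB.edges))
    (hAne : pA.edges ≠ []) (hBne : pB.edges ≠ [])
    (hAalt : AltChain red pA.edges) (hBalt : AltChain red pB.edges) :
    ∃ A B : SimpleGraph V, A ≤ U ∧ B ≤ U ∧
      IsAlternatingCircuit A red ∧ IsAlternatingCircuit B red ∧
      Disjoint A.edgeSet B.edgeSet ∧ A.edgeSet ∪ B.edgeSet = U.edgeSet ∧
      A.edgeSet.Nonempty ∧ B.edgeSet.Nonempty := by
  have hnd : (pA.edges ++ pB.edges).Nodup := hperm.nodup_iff.mp hE.isTrail.edges_nodup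
  rw [List.nodup_append] at hnd
  obtain ⟨hndA, hndB, hdisj⟩ := hnd
  obtain ⟨hACA, hleA, hesA⟩ := isAC_fromWalk pA hndA hAalt
  obtain ⟨hACB, hleB, hesB⟩ := isAC_fromWalk pB hndB hBalt
  refine ⟨_, _, hleA, hleB, hACA, hACB, ?_, ?_, ?_, ?_⟩
  · rw [hesA, hesB, Set.disjoint_left]
    intro e heA heB
    exact hdisj e heA e heB rfl
  · rw [hesA, hesB]
    ext e
    have hme : e ∈ w.edges ↔ e ∈ U.edgeSet := hE.mem_edges_iff
    rw [← hme, hperm.mem_iff]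
    simp [List.mem_append]
  · rw [hesA]
    obtain ⟨a, t, h⟩ := List.exists_cons_of_ne_nil hAne
    exact ⟨a, by simp [h]⟩
  · rw [hesB]
    obtain ⟨a, t, h⟩ := List.exists_cons_of_ne_nil hBne
    exact ⟨a, by simp [h]⟩

open SimpleGraph Walk in
lemma splitAC [Fintype V] {U : SimpleGraph V} {red : Sym2 V → Prop}
    (hU : IsAlternatingCircuit U red) (x : V)
    (h3 : 3 ≤ {u | U.Adj x u ∧ red s(x, u)}.ncard) :
    ∃ A B : SimpleGraph V, A ≤ U ∧ B ≤ U ∧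
      IsAlternatingCircuit A red ∧ IsAlternatingCircuit B red ∧
      Disjoint A.edgeSet B.edgeSet ∧ A.edgeSet ∪ B.edgeSet = U.edgeSet ∧
      A.edgeSet.Nonempty ∧ B.edgeSet.Nonempty := by
  classical
  obtain ⟨v, w, hE, hA⟩ := hU
  -- x is on the walk
  obtain ⟨u₀, hu₀⟩ : {u | U.Adj x u ∧ red s(x, u)}.Nonempty :=
    Set.nonempty_of_ncard_ne_zero (by omega)
  have hx : x ∈ w.support :=
    w.fst_mem_support_of_mem_edges (hE.mem_edges_iff.mpr (U.mem_edgeSet.mpr hu₀.1))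
  -- rotate to x
  set w₀ : U.Walk x x := w.rotate x hx with hw₀
  have hperm₀ : w₀.edges.Perm w.edges := (w.rotate_edges x hx).perm
  have hE₀ : w₀.IsEulerian := fun e he => by rw [hperm₀.count_eq]; exact hE e he
  have hA₀ : AltChain red w₀.edges := altChain_of_rotated hA (w.rotate_edges x hx).symm
  -- make the first edge blue, reversing if necessary
  obtain ⟨w₁, hE₁, hA₁, hhead⟩ :
      ∃ w₁ : U.Walk x x, w₁.IsEulerian ∧ AltChain red w₁.edges ∧
        ∀ e ∈ w₁.edges.head?, ¬ red e := by
    by_cases hh : ∀ e ∈ w₀.edges.head?, ¬ red e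
    · exact ⟨w₀, hE₀, hA₀, hh⟩
    · push_neg at hh
      obtain ⟨e₀, he₀mem, he₀red⟩ := hh
      refine ⟨w₀.reverse, ?_, ?_, ?_⟩
      · intro e he
        rw [Walk.edges_reverse, List.count_reverse]
        exact hE₀ e he
      · rw [Walk.edges_reverse]
        exact altChain_reverse hA₀
      · intro f hf hfred
        rw [Walk.edges_reverse, List.head?_reverse] at hf
        exact ((altChain_iff red w₀.edges).mp hA₀).2 f hf e₀ he₀mem
          (iff_of_true hfred he₀red)
  clear_value w₀
  clear hperm₀ hE₀ hA₀ hw₀ hE hA hx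
  -- at least 3 occurrences of x in the tail of the support
  have hm : 3 ≤ w₁.support.tail.count x := by
    have hcnt := countA (U := U) (red := red) x w₁ ((altChain_iff red w₁.edges).mp hA₁).1
    have hb : (match w₁.edges with
        | [] => 0
        | e :: _ => if x = x ∧ red e then 1 else 0) = 0 := by
      cases hqe : w₁.edges with
      | nil => rfl
      | cons e r =>
        have : ¬ red e := hhead e (by rw [hqe]; rfl)
        simp [this]
    rw [hb] at hcnt
    have h3' := (ncard_le_countP hE₁ x).trans hcnt
    omega
  clear hhead h3 hu₀
  -- peel off the first edge
  have hnil : ¬ w₁.Nil := by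
    intro hnil
    rw [Walk.nil_iff_support_eq] at hnil
    rw [hnil] at hm
    simp at hm
  obtain ⟨y, h₀, q, rfl⟩ := Walk.not_nil_iff.mp hnil
  have hmq : 3 ≤ q.support.count x := by
    simpa using hm
  have hqx : x ∈ q.support := by
    by_contra hcon
    rw [List.count_eq_zero_of_not_mem hcon] at hmq
    omega
  -- first interior split
  set q₁ := q.takeUntil x hqx with hq₁
  set q₂ := q.dropUntil x hqx with hq₂def
  have hq : q₁.append q₂ = q := q.take_spec hqx
  have hcnt₂ : 2 ≤ q₂.support.tail.count x := by
    have h1 : q₁.support.count x = 1 := q.count_support_takeUntil_eq_one hqx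
    have : q.support = q₁.support ++ q₂.support.tail := by
      rw [← hq, Walk.support_append]
    rw [this, List.count_append] at hmq
    omega
  have hnil₂ : ¬ q₂.Nil := by
    intro hnil
    rw [Walk.nil_iff_support_eq] at hnil
    rw [hnil] at hcnt₂
    simp at hcnt₂
  obtain ⟨z, h₁, r, hq₂⟩ := Walk.not_nil_iff.mp hnil₂
  have hmr : 2 ≤ r.support.count x := by
    have : q₂.support.tail = r.support := by rw [hq₂]; simp
    rw [this] at hcnt₂
    exact hcnt₂
  have hrx : x ∈ r.support := by
    by_contra hcon
    rw [List.count_eq_zero_of_not_mem hcon] at hmr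
    omega
  -- second interior split
  set r₁ := r.takeUntil x hrx with hr₁
  set r₂ := r.dropUntil x hrx with hr₂def
  have hr : r₁.append r₂ = r := r.take_spec hrx
  have hcnt₃ : 1 ≤ r₂.support.tail.count x := by
    have h1 : r₁.support.count x = 1 := r.count_support_takeUntil_eq_one hrx
    have : r.support = r₁.support ++ r₂.support.tail := by
      rw [← hr, Walk.support_append]
    rw [this, List.count_append] at hmr
    omega
  have hnil₃ : ¬ r₂.Nil := by
    intro hnil
    rw [Walk.nil_iff_support_eq] at hnil
    rw [hnil] at hcnt₃
    simp at hcnt₃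
  -- the three pieces
  set p₁ : U.Walk x x := Walk.cons h₀ q₁ with hp₁
  set p₂ : U.Walk x x := Walk.cons h₁ r₁ with hp₂
  set p₃ : U.Walk x x := r₂ with hp₃
  have hsplit : p₁.append (p₂.append p₃) = Walk.cons h₀ q := by
    rw [hp₁, hp₂, hp₃, Walk.cons_append, Walk.cons_append, hr, ← hq₂, hq]
  have hedges : (Walk.cons h₀ q).edges = p₁.edges ++ (p₂.edges ++ p₃.edges) := by
    rw [← hsplit, Walk.edges_append, Walk.edges_append]
  have hne₁ : p₁.edges ≠ [] := by rw [hp₁]; simp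
  have hne₂ : p₂.edges ≠ [] := by rw [hp₂]; simp
  have hne₃ : p₃.edges ≠ [] := by
    intro hcon
    apply hnil₃
    rw [Walk.nil_iff_length_eq, ← Walk.length_edges]
    rw [hp₃] at hcon
    rw [hcon]
    rfl
  have hAfull : AltChain red (p₁.edges ++ (p₂.edges ++ p₃.edges)) := hedges ▸ hA₁
  -- heads of the three pieces
  obtain ⟨e₂, t₂, he₂⟩ := List.exists_cons_of_ne_nil hne₂
  obtain ⟨e₃, t₃, he₃⟩ := List.exists_cons_of_ne_nil hne₃
  obtain ⟨e₁, t₁, he₁⟩ := List.exists_cons_of_ne_nil hne₁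
  by_cases hij : red e₂ ↔ red e₃
  · -- middle piece splits off
    have hsp := altChain_split3 hne₁ hne₂ hne₃ hAfull ?_
    · obtain ⟨hA13, hA2⟩ := hsp
      have hperm : (Walk.cons h₀ q).edges.Perm ((p₁.append p₃).edges ++ p₂.edges) := by
        rw [hedges, Walk.edges_append, List.append_assoc]
        exact List.Perm.append_left _ List.perm_append_comm
      refine assemble hE₁ (p₁.append p₃) p₂ hperm ?_ hne₂ ?_ hA2
      · rw [Walk.edges_append]
        intro hcon
        rw [List.append_eq_nil_iff] at hcon
        exact hne₁ hcon.1
      · rw [Walk.edges_append]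
        exact hA13
    · intro a ha b hb
      rw [he₂] at ha
      rw [he₃] at hb
      obtain rfl : e₂ = a := by simpa using ha
      obtain rfl : e₃ = b := by simpa using hb
      exact hij
  · by_cases h0i : red e₁ ↔ red e₂
    · -- split after p₁
      have hsp := altChain_split2 hne₁ (l₂ := p₂.edges ++ p₃.edges) (by
          intro hcon
          rw [List.append_eq_nil_iff] at hcon
          exact hne₂ hcon.1) hAfull ?_
      · obtain ⟨hA1, hA23⟩ := hsp
        have hperm : (Walk.cons h₀ q).edges.Perm (p₁.edges ++ (p₂.append p₃).edges) := by
          rw [hedges, Walk.edges_append]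
        refine assemble hE₁ p₁ (p₂.append p₃) hperm hne₁ ?_ hA1 ?_
        · rw [Walk.edges_append]
          intro hcon
          rw [List.append_eq_nil_iff] at hcon
          exact hne₂ hcon.1
        · rw [Walk.edges_append]
          exact hA23
      · intro a ha b hb
        rw [he₁] at ha
        rw [List.head?_append_of_ne_nil _ hne₂, he₂] at hb
        obtain rfl : e₁ = a := by simpa using ha
        obtain rfl : e₂ = b := by simpa using hb
        exact h0i
    · -- split before p₃
      have h0j : red e₁ ↔ red e₃ := by tauto
      have hAfull' : AltChain red ((p₁.edges ++ p₂.edges) ++ p₃.edges) := by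
        rw [List.append_assoc]
        exact hAfull
      have hsp := altChain_split2 (l₁ := p₁.edges ++ p₂.edges) (by
          intro hcon
          rw [List.append_eq_nil_iff] at hcon
          exact hne₁ hcon.1) hne₃ hAfull' ?_
      · obtain ⟨hA12, hA3⟩ := hsp
        have hperm : (Walk.cons h₀ q).edges.Perm ((p₁.append p₂).edges ++ p₃.edges) := by
          rw [hedges, Walk.edges_append, List.append_assoc]
        refine assemble hE₁ (p₁.append p₂) p₃ hperm ?_ hne₃ ?_ hA3
        · rw [Walk.edges_append]
          intro hcon
          rw [List.append_eq_nil_iff] at hcon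
          exact hne₁ hcon.1
        · rw [Walk.edges_append]
          exact hA12
      · intro a ha b hb
        rw [List.head?_append_of_ne_nil _ hne₁, he₁] at ha
        rw [he₃] at hb
        obtain rfl : e₁ = a := by simpa using ha
        obtain rfl : e₃ = b := by simpa using hb
        exact h0j

lemma altChain_congr' {red red' : Sym2 V → Prop}
    (hrr : ∀ e f, (red e ↔ red f) ↔ (red' e ↔ red' f))
    {l : List (Sym2 V)} (h : AltChain red l) : AltChain red' l := by
  refine List.IsChain.imp ?_ h
  intro e f hef hiff
  exact hef ((hrr e f).mpr hiff)

lemma isAC'_congr {S : SimpleGraph V} {red red' : Sym2 V → Prop}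
    (hrr : ∀ e f, (red e ↔ red f) ↔ (red' e ↔ red' f))
    (h : IsAlternatingCircuit S red) : IsAlternatingCircuit S red' := by
  obtain ⟨v, w, hE, hA⟩ := h
  exact ⟨v, w, hE, altChain_congr' hrr hA⟩

lemma decompose [Fintype V] (red : Sym2 V → Prop) (n : ℕ) :
    ∀ (U : SimpleGraph V), U.edgeSet.ncard ≤ n → IsAlternatingCircuit U red →
    ∃ 𝒰 : Set (SimpleGraph V),
      (∀ C ∈ 𝒰, C ≤ U ∧ IsMinimalAC C red) ∧
      (𝒰.Pairwise fun C D => Disjoint C.edgeSet D.edgeSet) ∧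
      (⋃ C ∈ 𝒰, C.edgeSet) = U.edgeSet := by
  induction n with
  | zero =>
    intro U hc hU
    refine ⟨∅, by simp, by simp, ?_⟩
    have : U.edgeSet = ∅ := by
      rw [← Set.ncard_eq_zero (U.edgeSet.toFinite)]
      omega
    simp [this]
  | succ n ih =>
    intro U hc hU
    by_cases hmin : ∀ v : V, {u | U.Adj v u ∧ red s(v, u)}.ncard ≤ 2 ∧
        {u | U.Adj v u ∧ ¬ red s(v, u)}.ncard ≤ 2
    · refine ⟨{U}, ?_, Set.pairwise_singleton _ _, by simp⟩
      rintro C rfl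
      exact ⟨le_rfl, hU, hmin⟩
    · push_neg at hmin
      obtain ⟨x, hx⟩ := hmin
      have hsplit : ∃ A B : SimpleGraph V, A ≤ U ∧ B ≤ U ∧
          IsAlternatingCircuit A red ∧ IsAlternatingCircuit B red ∧
          Disjoint A.edgeSet B.edgeSet ∧ A.edgeSet ∪ B.edgeSet = U.edgeSet ∧
          A.edgeSet.Nonempty ∧ B.edgeSet.Nonempty := by
        by_cases hr : {u | U.Adj x u ∧ red s(x, u)}.ncard ≤ 2
        · have hb : 3 ≤ {u | U.Adj x u ∧ ¬ red s(x, u)}.ncard := hx hr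
          have hU' : IsAlternatingCircuit U (fun e => ¬ red e) :=
            isAC'_congr (fun e f => not_iff_not.symm) hU
          obtain ⟨A, B, hAle, hBle, hACA, hACB, rest⟩ := splitAC hU' x hb
          exact ⟨A, B, hAle, hBle, isAC'_congr (fun e f => not_iff_not) hACA,
            isAC'_congr (fun e f => not_iff_not) hACB, rest⟩
        · have hb : 3 ≤ {u | U.Adj x u ∧ red s(x, u)}.ncard := by omega
          exact splitAC hU x hb
      obtain ⟨A, B, hAle, hBle, hACA, hACB, hdis, hun, hAne, hBne⟩ := hsplit
      have hfinA := A.edgeSet.toFinite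
      have hfinB := B.edgeSet.toFinite
      have hsum : A.edgeSet.ncard + B.edgeSet.ncard = U.edgeSet.ncard := by
        rw [← hun, Set.ncard_union_eq hdis hfinA hfinB]
      have hposA : 0 < A.edgeSet.ncard := (Set.ncard_pos hfinA).mpr hAne
      have hposB : 0 < B.edgeSet.ncard := (Set.ncard_pos hfinB).mpr hBne
      obtain ⟨𝒰A, hA1, hA2, hA3⟩ := ih A (by omega) hACA
      obtain ⟨𝒰B, hB1, hB2, hB3⟩ := ih B (by omega) hACB
      refine ⟨𝒰A ∪ 𝒰B, ?_, ?_, ?_⟩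
      · rintro C (hC | hC)
        · exact ⟨(hA1 C hC).1.trans hAle, (hA1 C hC).2⟩
        · exact ⟨(hB1 C hC).1.trans hBle, (hB1 C hC).2⟩
      · rintro C (hC | hC) D (hD | hD) hne
        · exact hA2 hC hD hne
        · exact Set.disjoint_of_subset
            ((Set.subset_biUnion_of_mem hC).trans hA3.subset)
            ((Set.subset_biUnion_of_mem hD).trans hB3.subset) hdis
        · exact Set.disjoint_of_subset
            ((Set.subset_biUnion_of_mem hC).trans hB3.subset)
            ((Set.subset_biUnion_of_mem hD).trans hA3.subset) hdis.symm
        · exact hB2 hC hD hne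
      · rw [Set.biUnion_union, hA3, hB3, hun]


theorem stmt11 {V : Type*} [Fintype V] (U : SimpleGraph V) (red : Sym2 V → Prop)
    (hU : IsAlternatingCircuit U red) :
    ∃ 𝒰 : Set (SimpleGraph V),
      (∀ C ∈ 𝒰, C ≤ U ∧ IsMinimalAC C red) ∧
      (𝒰.Pairwise fun C D => Disjoint C.edgeSet D.edgeSet) ∧
      (⋃ C ∈ 𝒰, C.edgeSet) = U.edgeSet ∧
      ∀ S : Set (Sym2 V), S ⊆ U.edgeSet →
        ∃ 𝒰' ⊆ 𝒰, S ⊆ ⋃ C ∈ 𝒰', C.edgeSet := by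
  obtain ⟨𝒰, h1, h2, h3⟩ := decompose red U.edgeSet.ncard U le_rfl hU
  exact ⟨𝒰, h1, h2, h3, fun S hS => ⟨𝒰, subset_rfl, h3 ▸ hS⟩⟩
end

section
/- Let G be an edge-weighted graph, H a minimum-weight f-factor of G, T ⊆ E(G) \ E(H), and H' a minimum-weight f-factor among all f-factors containing T. Color E(H) Δ E(H') with red for edges of H and blue for edges of H', and let S be any decomposition of the symmetric difference into edge-disjoint minimal alternating circuits. Then every circuit s in S with positive weight W(s) contains at least one edge of T. -/
open SimpleGraph

variable {V : Type*}

/-- Cyclic consecutive property from a chain on `L ++ L.take 1`. -/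
lemma cyclic_get {α : Type*} {R : α → α → Prop} {L : List α} (hL : 0 < L.length)
    (h : List.Chain' R (L ++ L.take 1)) (i : ℕ) (hi : i < L.length) :
    R (L.get ⟨i, hi⟩)
      (L.get ⟨(i + 1) % L.length, Nat.mod_lt _ hL⟩) := by
  unfold List.Chain' at h
  rw [List.isChain_iff_getElem] at h
  have hlen : (L ++ L.take 1).length = L.length + 1 := by
    simp [List.length_take]
    omega
  have h' : R ((L ++ L.take 1).get ⟨i, by omega⟩) ((L ++ L.take 1).get ⟨i + 1, by omega⟩) :=
    h i (by omega)
  have e1 : (L ++ L.take 1).get ⟨i, by omega⟩ = L.get ⟨i, hi⟩ := by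
    exact List.getElem_append_left hi
  by_cases hsucc : i + 1 < L.length
  · have e2 : (L ++ L.take 1).get ⟨i + 1, by omega⟩ = L.get ⟨i + 1, hsucc⟩ := by
      exact List.getElem_append_left hsucc
    rw [e1, e2] at h'
    convert h' using 2
    simp [Nat.mod_eq_of_lt hsucc]
  · have hie : i + 1 = L.length := by omega
    have e2 : (L ++ L.take 1).get ⟨i + 1, by omega⟩ = L.get ⟨0, hL⟩ := by
      have : (L ++ L.take 1).get ⟨i + 1, by omega⟩ =
          (L.take 1).get ⟨(i+1) - L.length, by simp [List.length_take]; omega⟩ := by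
        exact List.getElem_append_right (by omega)
      rw [this]
      simp [show i + 1 - L.length = 0 by omega, List.getElem_take']
    rw [e1, e2] at h'
    convert h' using 2
    simp [hie]

lemma nxt_inj_aux {n : ℕ} (i j : ℕ) (hi : i < n) (hj : j < n)
    (h : (i + 1) % n = (j + 1) % n) : i = j := by
  have e : ∀ k, k < n → (k + 1) % n = if k + 1 = n then 0 else k + 1 := by
    intro k hk
    split_ifs with hkn
    · rw [hkn, Nat.mod_self]
    · exact Nat.mod_eq_of_lt (by omega)
  rw [e i hi, e j hj] at h
  split_ifs at h <;> omega

lemma nxt_surj_aux {n : ℕ} (hn : 0 < n) (j : ℕ) (hj : j < n) :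
    ∃ i, i < n ∧ (i + 1) % n = j := by
  rcases Nat.eq_zero_or_pos j with rfl | hj0
  · exact ⟨n - 1, by omega, by rw [Nat.sub_add_cancel hn, Nat.mod_self]⟩
  · exact ⟨j - 1, by omega, by rw [Nat.sub_add_cancel hj0, Nat.mod_eq_of_lt hj]⟩


lemma alt_balance {V : Type*} [Fintype V] (S : SimpleGraph V) (red : Sym2 V → Prop)
    (h : IsAlternatingCircuit S red) (v : V) :
    {u | S.Adj v u ∧ red s(v, u)}.ncard = {u | S.Adj v u ∧ ¬ red s(v, u)}.ncard := by
  classical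
  obtain ⟨x, wk, hE, hA⟩ := h
  set L := wk.darts with hLdef
  have hedges : wk.edges = L.map SimpleGraph.Dart.edge := rfl
  by_cases h0 : L.length = 0
  · have hempty : ∀ u, ¬ S.Adj v u := by
      intro u hu
      have hm : s(v, u) ∈ wk.edges := hE.mem_edges_iff.mpr (S.mem_edgeSet.mpr hu)
      rw [hedges, List.length_eq_zero_iff.mp h0] at hm
      simp at hm
    have e1 : {u | S.Adj v u ∧ red s(v, u)} = ∅ := by
      ext u; simp only [Set.mem_setOf_eq, Set.mem_empty_iff_false, iff_false]
      rintro ⟨ha, -⟩; exact hempty u ha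
    have e2 : {u | S.Adj v u ∧ ¬ red s(v, u)} = ∅ := by
      ext u; simp only [Set.mem_setOf_eq, Set.mem_empty_iff_false, iff_false]
      rintro ⟨ha, -⟩; exact hempty u ha
    rw [e1, e2]
  · set n := L.length with hndef
    have hn : 0 < n := Nat.pos_of_ne_zero h0
    have hLne : L ≠ [] := fun hh => h0 (by simp [hndef, hh])
    set nxt : Fin n → Fin n := fun i => ⟨(i.val + 1) % n, Nat.mod_lt _ hn⟩ with hnxtdef
    -- cyclic dart adjacency
    have htake : L.take 1 = [L.head hLne] := by
      have h1 : L = L.head hLne :: L.tail := (List.cons_head_tail hLne).symm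
      conv_lhs => rw [h1]
      rfl
    have hchain2 : List.Chain' S.DartAdj (L ++ L.take 1) := by
      unfold List.Chain'
      rw [List.isChain_append]
      refine ⟨wk.isChain_dartAdj_darts, by rw [htake]; exact List.isChain_singleton _, ?_⟩
      intro a ha b hb
      rw [List.getLast?_eq_getLast hLne, Option.mem_def, Option.some.injEq] at ha
      rw [htake] at hb
      simp only [List.head?_cons, Option.mem_def, Option.some.injEq] at hb
      subst ha; subst hb
      show (L.getLast hLne).snd = (L.head hLne).fst
      rw [wk.getLast_darts_eq_lastDart hLne, wk.head_darts_eq_firstDart hLne]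
      simp
    have fact_adj : ∀ i : Fin n, (L.get i).snd = (L.get (nxt i)).fst := by
      intro i
      exact cyclic_get hn hchain2 i.val i.isLt
    -- cyclic alternation
    have hchain3 : List.Chain' (fun d d' : S.Dart => ¬ (red d.edge ↔ red d'.edge))
        (L ++ L.take 1) := by
      have : AltChain red (L.map SimpleGraph.Dart.edge) := hedges ▸ hA
      unfold AltChain at this
      unfold List.Chain' at this ⊢
      rw [← List.map_take, ← List.map_append, List.isChain_map] at this
      exact this
    have fact_alt : ∀ i : Fin n, ¬ (red (L.get i).edge ↔ red (L.get (nxt i)).edge) := by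
      intro i
      exact cyclic_get hn hchain3 i.val i.isLt
    -- injectivity of edges along the walk
    have einj : ∀ i j : Fin n, (L.get i).edge = (L.get j).edge → i = j := by
      intro i j hij
      have hnd := hE.isTrail.edges_nodup
      rw [hedges, List.nodup_iff_injective_get] at hnd
      have hlm : (L.map SimpleGraph.Dart.edge).length = n := by simp [hndef]
      have := hnd (a₁ := ⟨i.val, by rw [hlm]; exact i.isLt⟩)
        (a₂ := ⟨j.val, by rw [hlm]; exact j.isLt⟩) (by simp only [List.get_eq_getElem, List.getElem_map]; exact hij)
      exact Fin.ext (by simpa using congrArg Fin.val this)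
    -- coverage
    have ecov : ∀ u, S.Adj v u → ∃ i : Fin n, (L.get i).edge = s(v, u) := by
      intro u hu
      have hm : s(v, u) ∈ wk.edges := hE.mem_edges_iff.mpr (S.mem_edgeSet.mpr hu)
      rw [hedges, List.mem_map] at hm
      obtain ⟨d, hd, hde⟩ := hm
      obtain ⟨i, hi⟩ := List.get_of_mem hd
      exact ⟨i, by rw [hi, hde]⟩
    have dedge : ∀ d : S.Dart, d.edge = s(d.fst, d.snd) := fun d => rfl
    -- the four index sets
    set A : Set (Fin n) := {i | (L.get i).fst = v ∧ red (L.get i).edge} with hAdef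
    set B : Set (Fin n) := {i | (L.get i).snd = v ∧ red (L.get i).edge} with hBdef
    set A' : Set (Fin n) := {i | (L.get i).fst = v ∧ ¬ red (L.get i).edge} with hA'def
    set B' : Set (Fin n) := {i | (L.get i).snd = v ∧ ¬ red (L.get i).edge} with hB'def
    have hnxt_inj : Function.Injective nxt := by
      intro i j hij
      exact Fin.ext (nxt_inj_aux i.val j.val i.isLt j.isLt (by simpa using congrArg Fin.val hij))
    have hnxt_surj : ∀ j : Fin n, ∃ i : Fin n, nxt i = j := by
      intro j
      obtain ⟨i0, hi0n, hi0⟩ := nxt_surj_aux hn j.val j.isLt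
      exact ⟨⟨i0, hi0n⟩, Fin.ext (by simpa using hi0)⟩
    have hBA' : B.ncard = A'.ncard := by
      have himg : nxt '' B = A' := by
        ext j
        constructor
        · rintro ⟨i, hi, rfl⟩
          obtain ⟨h1, h2⟩ := hi
          refine ⟨(fact_adj i).symm.trans h1, ?_⟩
          have := fact_alt i
          tauto
        · intro hj
          obtain ⟨i, rfl⟩ := hnxt_surj j
          obtain ⟨hj1, hj2⟩ := hj
          refine ⟨i, ⟨(fact_adj i).trans hj1, ?_⟩, rfl⟩
          have := fact_alt i
          tauto
      rw [← himg, Set.ncard_image_of_injective _ hnxt_inj]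
    have hB'A : B'.ncard = A.ncard := by
      have himg : nxt '' B' = A := by
        ext j
        constructor
        · rintro ⟨i, hi, rfl⟩
          obtain ⟨h1, h2⟩ := hi
          refine ⟨(fact_adj i).symm.trans h1, ?_⟩
          have := fact_alt i
          tauto
        · intro hj
          obtain ⟨i, rfl⟩ := hnxt_surj j
          obtain ⟨hj1, hj2⟩ := hj
          refine ⟨i, ⟨(fact_adj i).trans hj1, ?_⟩, rfl⟩
          have := fact_alt i
          tauto
      rw [← himg, Set.ncard_image_of_injective _ hnxt_inj]
    -- counting the neighbor sets
    set other : Fin n → V := fun i => if (L.get i).fst = v then (L.get i).snd else (L.get i).fst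
      with hotherdef
    have hcount : ∀ r : Sym2 V → Prop,
        {u | S.Adj v u ∧ r s(v, u)}.ncard =
          {i : Fin n | (L.get i).fst = v ∧ r (L.get i).edge}.ncard +
          {i : Fin n | (L.get i).snd = v ∧ r (L.get i).edge}.ncard := by
      intro r
      set Aa : Set (Fin n) := {i | (L.get i).fst = v ∧ r (L.get i).edge} with hAadef
      set Bb : Set (Fin n) := {i | (L.get i).snd = v ∧ r (L.get i).edge} with hBbdef
      have hdisj : Disjoint Aa Bb := by
        rw [Set.disjoint_left]
        intro i hiA hiB
        have := (L.get i).adj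
        rw [hiA.1, hiB.1] at this
        exact S.loopless.irrefl v this
      have hkey : ∀ i ∈ Aa ∪ Bb, (L.get i).edge = s(v, other i) := by
        intro i hi
        have hg : other i = if (L.get i).fst = v then (L.get i).snd else (L.get i).fst := rfl
        rcases hi with hi | hi
        · rw [hg, if_pos hi.1, dedge, hi.1]
        · by_cases hf : (L.get i).fst = v
          · rw [hg, if_pos hf, dedge, hf]
          · rw [hg, if_neg hf, dedge, hi.1, Sym2.eq_swap]
      have hinj : Set.InjOn other (Aa ∪ Bb) := by
        intro i hi j hj hij
        apply einj
        rw [hkey i hi, hkey j hj, hij]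
      have himg : other '' (Aa ∪ Bb) = {u | S.Adj v u ∧ r s(v, u)} := by
        ext u
        constructor
        · rintro ⟨i, hi, rfl⟩
          have hedge := hkey i hi
          have hg : other i = if (L.get i).fst = v then (L.get i).snd else (L.get i).fst := rfl
          have hadj : S.Adj (L.get i).fst (L.get i).snd := (L.get i).adj
          constructor
          · rcases hi with hi | hi
            · rw [hg, if_pos hi.1, ← hi.1]; exact hadj
            · by_cases hf : (L.get i).fst = v
              · rw [hg, if_pos hf, ← hf]; exact hadj
              · rw [hg, if_neg hf, ← hi.1]; exact hadj.symm
          · rw [← hedge]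
            rcases hi with hi | hi
            · exact hi.2
            · exact hi.2
        · intro hu
          obtain ⟨i, hi⟩ := ecov u hu.1
          have hcases : ((L.get i).fst = v ∧ (L.get i).snd = u) ∨
              ((L.get i).fst = u ∧ (L.get i).snd = v) := by
            rw [dedge] at hi
            rwa [Sym2.eq_iff] at hi
          have hg : other i = if (L.get i).fst = v then (L.get i).snd else (L.get i).fst := rfl
          refine ⟨i, ?_, ?_⟩
          · rcases hcases with ⟨h1, h2⟩ | ⟨h1, h2⟩
            · left; exact ⟨h1, by rw [hi]; exact hu.2⟩
            · right; exact ⟨h2, by rw [hi]; exact hu.2⟩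
          · rcases hcases with ⟨h1, h2⟩ | ⟨h1, h2⟩
            · rw [hg, if_pos h1, h2]
            · have hne : (L.get i).fst ≠ v := by rw [h1]; exact hu.1.ne'
              rw [hg, if_neg hne, h1]
      rw [← himg, Set.ncard_image_of_injOn hinj,
        Set.ncard_union_eq hdisj (Set.toFinite _) (Set.toFinite _)]
    have hred' : {u | S.Adj v u ∧ red s(v, u)}.ncard = A.ncard + B.ncard := hcount red
    have hblue' : {u | S.Adj v u ∧ ¬ red s(v, u)}.ncard = A'.ncard + B'.ncard :=
      hcount (fun e => ¬ red e)
    rw [hred', hblue']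
    omega

lemma edgeSet_switching {V : Type*} (A B : SimpleGraph V) :
    (switching A B).edgeSet = (A.edgeSet \ B.edgeSet) ∪ (B.edgeSet \ A.edgeSet) := by
  ext e
  induction e using Sym2.ind with
  | _ a b =>
    rw [SimpleGraph.mem_edgeSet]
    show (A.Adj a b ∧ ¬ B.Adj a b) ∨ (B.Adj a b ∧ ¬ A.Adj a b) ↔ _
    simp only [Set.mem_union, Set.mem_diff, SimpleGraph.mem_edgeSet]

theorem stmt12 {V : Type*} [Fintype V] (G : SimpleGraph V) (w : Sym2 V → ℝ)
    (f : V → ℕ) (H H' : SimpleGraph V) (T : Set (Sym2 V))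
    (hT : T ⊆ G.edgeSet \ H.edgeSet)
    (hH : IsFFactor G H f)
    (hHmin : ∀ H2 : SimpleGraph V, IsFFactor G H2 f → wt w H ≤ wt w H2)
    (hH' : IsFFactor G H' f ∧ T ⊆ H'.edgeSet)
    (hH'min : ∀ H2 : SimpleGraph V, IsFFactor G H2 f → T ⊆ H2.edgeSet → wt w H' ≤ wt w H2)
    (𝒮 : Set (SimpleGraph V))
    (hmin : ∀ s ∈ 𝒮, IsMinimalAC s (fun e => e ∈ H.edgeSet))
    (hdisj : 𝒮.Pairwise fun a b => Disjoint a.edgeSet b.edgeSet)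
    (hdecomp : (⋃ s ∈ 𝒮, s.edgeSet) = (switching H H').edgeSet) :
    ∀ s ∈ 𝒮,
      0 < (∑ᶠ e ∈ (s.edgeSet \ H.edgeSet), w e) - (∑ᶠ e ∈ (s.edgeSet ∩ H.edgeSet), w e) →
        (s.edgeSet ∩ T).Nonempty := by
  classical
  intro s hs hpos
  by_contra hne
  rw [Set.not_nonempty_iff_eq_empty] at hne
  have hsub : s.edgeSet ⊆ (switching H H').edgeSet := by
    rw [← hdecomp]
    exact Set.subset_biUnion_of_mem hs
  have hkey : ∀ e ∈ s.edgeSet, (e ∈ H.edgeSet ↔ e ∉ H'.edgeSet) := by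
    intro e he
    have h1 := hsub he
    rw [edgeSet_switching] at h1
    rcases h1 with ⟨h1, h2⟩ | ⟨h1, h2⟩
    · exact ⟨fun _ => h2, fun _ => h1⟩
    · exact ⟨fun hh => absurd hh h2, fun hh => absurd h1 hh⟩
  set H2 := switching H' s with hH2def
  have hsG : s ≤ G := by
    intro a b hab
    have h1 := hsub ((SimpleGraph.mem_edgeSet s).mpr hab)
    rw [edgeSet_switching] at h1
    rcases h1 with ⟨h1, -⟩ | ⟨h1, -⟩
    · exact hH.1 h1
    · exact hH'.1.1 h1
  have hH2G : H2 ≤ G := by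
    intro a b hab
    rcases hab with ⟨h1, -⟩ | ⟨h1, -⟩
    · exact hH'.1.1 h1
    · exact hsG h1
  have hbalance := alt_balance s (fun e => e ∈ H.edgeSet) (hmin s hs).1
  have hH2edge : H2.edgeSet = (H'.edgeSet \ s.edgeSet) ∪ (s.edgeSet \ H'.edgeSet) :=
    edgeSet_switching H' s
  have hdeg : ∀ v, (H2.neighborSet v).ncard = f v := by
    intro v
    set Bv : Set V := {u | s.Adj v u ∧ ¬ s(v, u) ∈ H.edgeSet} with hBvdef
    set Rv : Set V := {u | s.Adj v u ∧ s(v, u) ∈ H.edgeSet} with hRvdef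
    have hk : ∀ u, s.Adj v u → (s(v, u) ∈ H.edgeSet ↔ ¬ H'.Adj v u) :=
      fun u ha => hkey s(v, u) ha
    have hsplit : H2.neighborSet v = (H'.neighborSet v \ Bv) ∪ Rv := by
      ext u
      simp only [SimpleGraph.mem_neighborSet, Set.mem_union, Set.mem_diff, hBvdef, hRvdef,
        Set.mem_setOf_eq]
      constructor
      · rintro (⟨h1, h2⟩ | ⟨h1, h2⟩)
        · exact Or.inl ⟨h1, fun hb => h2 hb.1⟩
        · exact Or.inr ⟨h1, (hk u h1).mpr h2⟩
      · rintro (⟨h1, h2⟩ | ⟨h1, h2⟩)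
        · refine Or.inl ⟨h1, fun ha => h2 ⟨ha, fun hh => (hk u ha).mp hh h1⟩⟩
        · exact Or.inr ⟨h1, (hk u h1).mp h2⟩
    have hBsub : Bv ⊆ H'.neighborSet v := by
      rintro u ⟨h1, h2⟩
      by_contra hh
      exact h2 ((hk u h1).mpr hh)
    have hdisj2 : Disjoint (H'.neighborSet v \ Bv) Rv := by
      rw [Set.disjoint_left]
      rintro u ⟨h1, -⟩ ⟨h2, h3⟩
      exact (hk u h2).mp h3 h1
    have hRB : Rv.ncard = Bv.ncard := hbalance v
    have hBle : Bv.ncard ≤ (H'.neighborSet v).ncard :=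
      Set.ncard_le_ncard hBsub (Set.toFinite _)
    rw [hsplit, Set.ncard_union_eq hdisj2 (Set.toFinite _) (Set.toFinite _),
      Set.ncard_diff hBsub (Set.toFinite _), hRB, hH'.1.2 v]
    rw [hH'.1.2 v] at hBle
    omega
  have hTsub : T ⊆ H2.edgeSet := by
    intro e he
    have h1 : e ∈ H'.edgeSet := hH'.2 he
    have h2 : e ∉ s.edgeSet := by
      intro hh
      have : e ∈ s.edgeSet ∩ T := ⟨hh, he⟩
      rw [hne] at this
      exact this
    rw [hH2edge]
    exact Or.inl ⟨h1, h2⟩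
  have id1 : s.edgeSet ∩ H'.edgeSet = s.edgeSet \ H.edgeSet := by
    ext e
    constructor
    · rintro ⟨he, hh'⟩
      exact ⟨he, fun hh => (hkey e he).mp hh hh'⟩
    · rintro ⟨he, hh⟩
      refine ⟨he, ?_⟩
      by_contra hh'
      exact hh ((hkey e he).mpr hh')
  have id2 : s.edgeSet \ H'.edgeSet = s.edgeSet ∩ H.edgeSet := by
    ext e
    constructor
    · rintro ⟨he, hh'⟩
      exact ⟨he, (hkey e he).mpr hh'⟩
    · rintro ⟨he, hh⟩
      exact ⟨he, (hkey e he).mp hh⟩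
  have hsplitH' : H'.edgeSet = (H'.edgeSet \ s.edgeSet) ∪ (s.edgeSet ∩ H'.edgeSet) := by
    rw [Set.inter_comm, Set.diff_union_inter]
  have hw1 : wt w H' = (∑ᶠ e ∈ (H'.edgeSet \ s.edgeSet), w e) +
      (∑ᶠ e ∈ (s.edgeSet ∩ H'.edgeSet), w e) := by
    rw [wt]
    conv_lhs => rw [hsplitH']
    exact finsum_mem_union (by rw [Set.disjoint_left]; rintro e ⟨-, h2⟩ ⟨h3, -⟩; exact h2 h3)
      (Set.toFinite _) (Set.toFinite _)
  have hw2 : wt w H2 = (∑ᶠ e ∈ (H'.edgeSet \ s.edgeSet), w e) +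
      (∑ᶠ e ∈ (s.edgeSet \ H'.edgeSet), w e) := by
    rw [wt]
    conv_lhs => rw [hH2edge]
    exact finsum_mem_union (by rw [Set.disjoint_left]; rintro e ⟨-, h2⟩ ⟨h3, -⟩; exact h2 h3)
      (Set.toFinite _) (Set.toFinite _)
  have hle : wt w H' ≤ wt w H2 := hH'min H2 ⟨hH2G, hdeg⟩ hTsub
  rw [hw1, hw2, id1, id2] at hle
  linarith
end
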